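/- For a finitely supported multi-index ν and a unit multi-index e (i.e. |e| = 1), the sum over all multi-indices η with 0 < η ≤ ν of C(ν,η)·[1/2]_{|ν+e-η|}·[1/2]_{|η|} is at most [1/2]_{|ν+e|}. -/

import Mathlib

/-- `ffHalf n = |(1/2)_n|`, the absolute value of the falling factorial of `1/2`. -/
noncomputable def ffHalf (n : ℕ) : ℝ := |(descPochhammer ℝ n).eval (1/2 : ℝ)|

/-- degree `|ν|` of a multi-index: the sum of its entries. -/
def mdeg (ν : ℕ →₀ ℕ) : ℕ := ν.sum fun _ k => k

/-- multi-index binomial coefficient `C(ν,η) = ∏_j C(ν_j, η_j)`. -/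
def mchoose (ν η : ℕ →₀ ℕ) : ℕ := ∏ j ∈ ν.support, (ν j).choose (η j)

lemma ffHalf_zero : ffHalf 0 = 1 := by simp [ffHalf]

lemma ffHalf_one : ffHalf 1 = 1/2 := by simp [ffHalf]

lemma ffHalf_nonneg (n : ℕ) : 0 ≤ ffHalf n := abs_nonneg _

lemma ffHalf_succ (n : ℕ) (hn : 1 ≤ n) :
    ffHalf (n+1) = ((n:ℝ) - 1/2) * ffHalf n := by
  unfold ffHalf
  rw [descPochhammer_succ_eval, abs_mul]
  have h1 : (1:ℝ) ≤ (n:ℝ) := by exact_mod_cast hn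
  have : |(1/2 : ℝ) - (n:ℝ)| = (n:ℝ) - 1/2 := by
    rw [abs_sub_comm, abs_of_nonneg]; linarith
  rw [this, mul_comm]

lemma sumP (n : ℕ) (F : ℕ → ℝ) :
    ∑ t ∈ Finset.range (n+2), ((n+1).choose t : ℝ) * F t
      = ∑ t ∈ Finset.range (n+1), (n.choose t : ℝ) * F t
        + ∑ t ∈ Finset.range (n+1), (n.choose t : ℝ) * F (t+1) := by
  have e1 := Finset.sum_range_succ' (fun t => ((n+1).choose t : ℝ) * F t) (n+1)
  have e2 := Finset.sum_range_succ' (fun t => ((n : ℕ).choose t : ℝ) * F t) (n+1)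
  have e3 := Finset.sum_range_succ (fun t => ((n : ℕ).choose t : ℝ) * F t) (n+1)
  simp only [Nat.choose_succ_self, Nat.cast_zero, zero_mul, add_zero, Nat.choose_zero_right,
    Nat.cast_one, one_mul] at e1 e2 e3
  have hsplit : ∑ j ∈ Finset.range (n+1), ((n+1).choose (j+1) : ℝ) * F (j+1)
      = ∑ j ∈ Finset.range (n+1), (n.choose j : ℝ) * F (j+1)
        + ∑ j ∈ Finset.range (n+1), (n.choose (j+1) : ℝ) * F (j+1) := by
    rw [← Finset.sum_add_distrib]
    refine Finset.sum_congr rfl fun j _ => ?_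
    have := Nat.choose_succ_succ' n j
    push_cast [this]; ring
  linarith [e1, e2, e3, hsplit]

lemma sumW (b m : ℕ) (F : ℕ → ℝ) :
    ∑ i ∈ Finset.range (b+1), ∑ k ∈ Finset.range (m+1),
        (b.choose i : ℝ) * (m.choose k : ℝ) * F (i+k)
      = ∑ t ∈ Finset.range (b+m+1), ((b+m).choose t : ℝ) * F t := by
  induction b generalizing F with
  | zero => simp
  | succ b ih =>
    have hG : ∀ i, ∑ k ∈ Finset.range (m+1), ((b+1).choose i : ℝ) * (m.choose k : ℝ) * F (i+k)
        = ((b+1).choose i : ℝ) * ∑ k ∈ Finset.range (m+1), (m.choose k : ℝ) * F (i+k) := by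
      intro i; rw [Finset.mul_sum]; refine Finset.sum_congr rfl fun k _ => by ring
    simp only [hG]
    rw [sumP b (fun i => ∑ k ∈ Finset.range (m+1), (m.choose k : ℝ) * F (i+k))]
    have h1 : ∑ t ∈ Finset.range (b+1), (b.choose t : ℝ)
          * ∑ k ∈ Finset.range (m+1), (m.choose k : ℝ) * F (t+k)
        = ∑ t ∈ Finset.range (b+m+1), ((b+m).choose t : ℝ) * F t := by
      rw [← ih F]
      refine Finset.sum_congr rfl fun t _ => ?_
      rw [Finset.mul_sum]; refine Finset.sum_congr rfl fun k _ => by ring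
    have h2 : ∑ t ∈ Finset.range (b+1), (b.choose t : ℝ)
          * ∑ k ∈ Finset.range (m+1), (m.choose k : ℝ) * F (t+1+k)
        = ∑ t ∈ Finset.range (b+m+1), ((b+m).choose t : ℝ) * F (t+1) := by
      rw [← ih (fun s => F (s+1))]
      refine Finset.sum_congr rfl fun t _ => ?_
      rw [Finset.mul_sum]
      refine Finset.sum_congr rfl fun k _ => ?_
      have : t + 1 + k = t + k + 1 := by ring
      rw [this]; ring
    rw [h1, h2, ← sumP (b+m) F]
    have : b + 1 + m = b + m + 1 := by ring
    rw [this]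

lemma key1 (n : ℕ) (hn : 1 ≤ n) :
    ∑ j ∈ Finset.range n, (n.choose (j+1) : ℝ) * (ffHalf (n - j) * ffHalf (j+1))
      = ffHalf (n+1) := by
  induction n, hn using Nat.le_induction with
  | base =>
    rw [ffHalf_succ 1 le_rfl]
    simp [ffHalf_one]
    norm_num
  | succ n hn ih =>
    -- split Pascal
    have hsplit : ∑ j ∈ Finset.range (n+1), ((n+1).choose (j+1) : ℝ)
          * (ffHalf (n+1-j) * ffHalf (j+1))
        = (∑ j ∈ Finset.range (n+1), (n.choose j : ℝ) * (ffHalf (n+1-j) * ffHalf (j+1)))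
          + ∑ j ∈ Finset.range (n+1), (n.choose (j+1) : ℝ) * (ffHalf (n+1-j) * ffHalf (j+1)) := by
      rw [← Finset.sum_add_distrib]
      refine Finset.sum_congr rfl fun j _ => ?_
      have := Nat.choose_succ_succ' n j
      push_cast [this]; ring
    rw [hsplit]
    -- B : first sum
    have hB : ∑ j ∈ Finset.range (n+1), (n.choose j : ℝ) * (ffHalf (n+1-j) * ffHalf (j+1))
        = (∑ i ∈ Finset.range n, (n.choose (i+1) : ℝ) * (((i:ℝ) + 1/2) * (ffHalf (n-i) * ffHalf (i+1))))
          + (1/2) * ffHalf (n+1) := by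
      rw [Finset.sum_range_succ' (fun j => (n.choose j : ℝ) * (ffHalf (n+1-j) * ffHalf (j+1))) n]
      simp only [Nat.choose_zero_right, Nat.cast_one, one_mul, Nat.sub_zero]
      rw [ffHalf_one]
      congr 1
      · refine Finset.sum_congr rfl fun i hi => ?_
        have hin : i < n := Finset.mem_range.mp hi
        have h1 : n + 1 - (i+1) = n - i := by omega
        have h2 : i + 1 + 1 = (i+1) + 1 := rfl
        rw [h1, h2, ffHalf_succ (i+1) (by omega)]
        push_cast; ring
      · ring
    -- A : second sum
    have hA : ∑ j ∈ Finset.range (n+1), (n.choose (j+1) : ℝ) * (ffHalf (n+1-j) * ffHalf (j+1))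
        = ∑ j ∈ Finset.range n, (n.choose (j+1) : ℝ)
            * ((((n:ℝ) - j) - 1/2) * (ffHalf (n-j) * ffHalf (j+1))) := by
      rw [Finset.sum_range_succ]
      simp only [Nat.choose_succ_self, Nat.cast_zero, zero_mul, add_zero]
      refine Finset.sum_congr rfl fun j hj => ?_
      have hjn : j < n := Finset.mem_range.mp hj
      have h1 : n + 1 - j = (n - j) + 1 := by omega
      rw [h1, ffHalf_succ (n-j) (by omega)]
      have h2 : ((n - j : ℕ) : ℝ) = (n:ℝ) - (j:ℝ) := by
        push_cast [Nat.cast_sub hjn.le]; ring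
      rw [h2]; ring
    rw [hB, hA]
    have hcomb : (∑ i ∈ Finset.range n, (n.choose (i+1) : ℝ)
            * (((i:ℝ) + 1/2) * (ffHalf (n-i) * ffHalf (i+1))))
          + ∑ j ∈ Finset.range n, (n.choose (j+1) : ℝ)
            * ((((n:ℝ) - j) - 1/2) * (ffHalf (n-j) * ffHalf (j+1)))
        = (n:ℝ) * ∑ j ∈ Finset.range n, (n.choose (j+1) : ℝ) * (ffHalf (n-j) * ffHalf (j+1)) := by
      rw [← Finset.sum_add_distrib, Finset.mul_sum]
      refine Finset.sum_congr rfl fun j _ => by ring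
    rw [add_right_comm, hcomb, ih]
    rw [ffHalf_succ (n+1) (by omega)]
    push_cast; ring


lemma mdeg_zero : mdeg 0 = 0 := by simp [mdeg]

lemma mdeg_add (f g : ℕ →₀ ℕ) : mdeg (f + g) = mdeg f + mdeg g :=
  Finsupp.sum_add_index' (fun _ => rfl) (fun _ _ _ => rfl)

lemma mdeg_single (a b : ℕ) : mdeg (Finsupp.single a b) = b :=
  Finsupp.sum_single_index rfl

lemma mdeg_eq_zero {f : ℕ →₀ ℕ} (h : mdeg f = 0) : f = 0 := by
  have := (Finset.sum_eq_zero_iff).mp h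
  ext a
  by_cases ha : a ∈ f.support
  · exact this a ha
  · simpa using Finsupp.notMem_support_iff.mp ha

lemma mdeg_mono {f g : ℕ →₀ ℕ} (h : f ≤ g) : mdeg f ≤ mdeg g := by
  obtain ⟨c, rfl⟩ := le_iff_exists_add.mp h
  rw [mdeg_add]; omega

lemma mchoose_zero (ν : ℕ →₀ ℕ) : mchoose ν 0 = 1 := by
  simp [mchoose]

lemma mchoose_single_add (a b i : ℕ) (f η : ℕ →₀ ℕ) (hfa : a ∉ f.support) (hb : b ≠ 0)
    (hηa : η a = 0) :
    mchoose (Finsupp.single a b + f) (Finsupp.single a i + η)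
      = b.choose i * mchoose f η := by
  have hdisj : Disjoint (Finsupp.single a b).support f.support := by
    rw [Finsupp.support_single_ne_zero a hb]
    simpa using hfa
  have hsupp : (Finsupp.single a b + f).support = insert a f.support := by
    rw [Finsupp.support_add_eq hdisj, Finsupp.support_single_ne_zero a hb]
    rfl
  rw [mchoose, hsupp, Finset.prod_insert hfa]
  have hfa0 : f a = 0 := Finsupp.notMem_support_iff.mp hfa
  congr 1
  · simp [hfa0, hηa]
  · refine Finset.prod_congr rfl fun j hj => ?_
    have hja : j ≠ a := fun h => hfa (h ▸ hj)
    simp [Finsupp.single_apply, hja.symm]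

lemma le_single_add_iff {a b : ℕ} (hb : b ≠ 0) (f : ℕ →₀ ℕ) (hfa : a ∉ f.support)
    (η : ℕ →₀ ℕ) (hη : η ≤ Finsupp.single a b + f) :
    η a ≤ b ∧ η.erase a ≤ f := by
  have hfa0 : f a = 0 := Finsupp.notMem_support_iff.mp hfa
  rw [Finsupp.le_def] at hη
  constructor
  · have := hη a; simpa [hfa0] using this
  · rw [Finsupp.le_def]
    intro j
    by_cases hja : j = a
    · simp [hja]
    · have := hη j
      simpa [Finsupp.single_apply, Ne.symm hja, Finsupp.erase_ne hja] using this

lemma sumV (ν : ℕ →₀ ℕ) (F : ℕ → ℝ) :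
    ∑ η ∈ Finset.Iic ν, (mchoose ν η : ℝ) * F (mdeg η)
      = ∑ k ∈ Finset.range (mdeg ν + 1), ((mdeg ν).choose k : ℝ) * F k := by
  induction ν using Finsupp.induction generalizing F with
  | zero =>
    have h : Finset.Iic (0 : ℕ →₀ ℕ) = {0} := by
      ext x; simp [Finset.mem_Iic, le_zero_iff]
    simp [h, mchoose_zero, mdeg_zero]
  | single_add a b f hfa hb ih =>
    have hfa0 : f a = 0 := Finsupp.notMem_support_iff.mp hfa
    have hbij : ∑ η ∈ Finset.Iic (Finsupp.single a b + f),
          (mchoose (Finsupp.single a b + f) η : ℝ) * F (mdeg η)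
        = ∑ p ∈ Finset.range (b+1) ×ˢ Finset.Iic f,
            ((b.choose p.1 : ℕ) : ℝ) * ((mchoose f p.2 : ℝ) * F (p.1 + mdeg p.2)) := by
      refine (Finset.sum_nbij' (fun η => (η a, η.erase a))
        (fun p => Finsupp.single a p.1 + p.2) ?_ ?_ ?_ ?_ ?_)
      · intro η hη
        obtain ⟨h1, h2⟩ := le_single_add_iff hb f hfa η (Finset.mem_Iic.mp hη)
        simp [Finset.mem_product, Finset.mem_range, Finset.mem_Iic, Nat.lt_succ_iff, h1, h2]
      · intro p hp
        rw [Finset.mem_product, Finset.mem_range, Finset.mem_Iic, Nat.lt_succ_iff] at hp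
        rw [Finset.mem_Iic, Finsupp.le_def]
        intro j
        by_cases hja : j = a
        · subst hja
          have hz : p.2 j = 0 := by
            have := (Finsupp.le_def.mp hp.2) j
            omega
          simp [hz, hfa0, hp.1]
        · have := (Finsupp.le_def.mp hp.2) j
          simp [Finsupp.single_apply, Ne.symm hja, this]
      · intro η _
        exact Finsupp.single_add_erase a η
      · intro p hp
        rw [Finset.mem_product, Finset.mem_range, Finset.mem_Iic, Nat.lt_succ_iff] at hp
        have hp2a : p.2 a = 0 := by
          have := (Finsupp.le_def.mp hp.2) a; omega
        have h1 : (Finsupp.single a p.1 + p.2) a = p.1 := by simp [hp2a]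
        have h2 : (Finsupp.single a p.1 + p.2).erase a = p.2 := by
          ext j
          by_cases hja : j = a
          · subst hja; simp [hp2a]
          · simp [Finsupp.erase_ne hja, Finsupp.single_apply, Ne.symm hja]
        rw [h1, h2]
      · intro η hη
        obtain ⟨h1, h2⟩ := le_single_add_iff hb f hfa η (Finset.mem_Iic.mp hη)
        have heraa : (η.erase a) a = 0 := Finsupp.erase_same
        have hmc : mchoose (Finsupp.single a b + f) η
            = b.choose (η a) * mchoose f (η.erase a) := by
          have h := mchoose_single_add a b (η a) f (η.erase a) hfa hb heraa
          rwa [Finsupp.single_add_erase a η] at h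
        have hm : mdeg η = η a + mdeg (η.erase a) := by
          conv_lhs => rw [← Finsupp.single_add_erase a η]
          rw [mdeg_add, mdeg_single]
        dsimp only
        rw [hmc, hm]
        push_cast; ring
    rw [hbij, Finset.sum_product]
    have hinner : ∀ i, ∑ η ∈ Finset.Iic f,
          ((b.choose i : ℕ) : ℝ) * ((mchoose f η : ℝ) * F (i + mdeg η))
        = ((b.choose i : ℕ) : ℝ) * ∑ k ∈ Finset.range (mdeg f + 1),
            ((mdeg f).choose k : ℝ) * F (i + k) := by
      intro i
      rw [← ih (fun k => F (i + k)), Finset.mul_sum]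
    simp only [hinner]
    have hW := sumW b (mdeg f) F
    have : ∑ i ∈ Finset.range (b+1), ((b.choose i : ℕ) : ℝ)
          * ∑ k ∈ Finset.range (mdeg f + 1), ((mdeg f).choose k : ℝ) * F (i + k)
        = ∑ i ∈ Finset.range (b+1), ∑ k ∈ Finset.range (mdeg f + 1),
            (b.choose i : ℝ) * ((mdeg f).choose k : ℝ) * F (i + k) := by
      refine Finset.sum_congr rfl fun i _ => ?_
      rw [Finset.mul_sum]; refine Finset.sum_congr rfl fun k _ => by ring
    rw [this, hW, mdeg_add, mdeg_single]


theorem ffHalf_multiindex_shifted_sum_le (ν e : ℕ →₀ ℕ) (j : ℕ)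
    (he : e = Finsupp.single j 1) :
    ∑ η ∈ Finset.Ioc 0 ν,
        (mchoose ν η : ℝ) * ffHalf (mdeg (ν + e - η)) * ffHalf (mdeg η)
      ≤ ffHalf (mdeg (ν + e)) := by
  subst he
  have hne : mdeg (ν + Finsupp.single j 1) = mdeg ν + 1 := by
    rw [mdeg_add, mdeg_single]
  set F : ℕ → ℝ := fun k => if k = 0 then 0 else ffHalf (mdeg ν + 1 - k) * ffHalf k with hF
  have hterm : ∀ η ∈ Finset.Ioc 0 ν,
      (mchoose ν η : ℝ) * ffHalf (mdeg (ν + Finsupp.single j 1 - η)) * ffHalf (mdeg η)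
        = (mchoose ν η : ℝ) * F (mdeg η) := by
    intro η hη
    rw [Finset.mem_Ioc] at hη
    have hη0 : η ≠ 0 := by
      intro h; rw [h] at hη; exact lt_irrefl _ hη.1
    have hd0 : mdeg η ≠ 0 := fun h => hη0 (mdeg_eq_zero h)
    have hle : η ≤ ν + Finsupp.single j 1 := le_trans hη.2 (self_le_add_right ν _)
    have hsub : (ν + Finsupp.single j 1 - η) + η = ν + Finsupp.single j 1 :=
      tsub_add_cancel_of_le hle
    have hmd : mdeg (ν + Finsupp.single j 1 - η) = mdeg ν + 1 - mdeg η := by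
      have h := congrArg mdeg hsub
      rw [mdeg_add, hne] at h
      omega
    rw [hmd, hF]
    simp only [if_neg hd0]
    ring
  rw [Finset.sum_congr rfl hterm]
  have hIic : Finset.Iic ν = insert 0 (Finset.Ioc 0 ν) := by
    ext x
    simp only [Finset.mem_Iic, Finset.mem_insert, Finset.mem_Ioc]
    constructor
    · intro h
      rcases eq_or_ne x 0 with h0 | h0
      · exact Or.inl h0
      · exact Or.inr ⟨pos_iff_ne_zero.mpr h0, h⟩
    · rintro (rfl | ⟨_, h⟩)
      · exact zero_le
      · exact h
  have h0notin : (0 : ℕ →₀ ℕ) ∉ Finset.Ioc 0 ν := by simp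
  have hsum : ∑ η ∈ Finset.Ioc 0 ν, (mchoose ν η : ℝ) * F (mdeg η)
      = ∑ η ∈ Finset.Iic ν, (mchoose ν η : ℝ) * F (mdeg η) := by
    rw [hIic, Finset.sum_insert h0notin, mdeg_zero, hF]
    simp
  rw [hsum, sumV ν F, hne]
  rcases Nat.eq_zero_or_pos (mdeg ν) with h0 | hpos
  · rw [h0]
    simp only [hF]
    simp [ffHalf_nonneg]
  · have hshift : ∑ k ∈ Finset.range (mdeg ν + 1), ((mdeg ν).choose k : ℝ) * F k
        = ∑ i ∈ Finset.range (mdeg ν), ((mdeg ν).choose (i+1) : ℝ)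
            * (ffHalf (mdeg ν - i) * ffHalf (i+1)) := by
      rw [Finset.sum_range_succ' (fun k => ((mdeg ν).choose k : ℝ) * F k) (mdeg ν)]
      simp only [hF]
      norm_num
      refine Finset.sum_congr rfl fun i hi => ?_
      have h2 : mdeg ν + 1 - (i+1) = mdeg ν - i := by omega
      rw [h2]
    rw [hshift, key1 (mdeg ν) hpos]
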